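/- Under assumptions (A1)–(A4): suppose there exists a sequence ε_i ∈ (0,1] with lim_{i→∞} ε_i = 0 such that for each i the initial value problem ẏ = f(t,y) + g(ε_i,t,y), y(0) = z_{ε_i} has a (Carathéodory) solution y^{ε_i} on [0, T] satisfying sup_{i≥1, 0≤t≤T} |y^{ε_i}(t)| ≤ C_2 for some constant C_2. Then the initial value problem ẋ = f(t,x), x(0) = z has a solution on [0, T]. -/

import Mathlib

open Set MeasureTheory intervalIntegral

/-- A (Carathéodory) solution of `ẏ = φ(t, y)`, `y(0) = y₀`, on `[0, T]`:
an (absolutely) continuous function satisfying the corresponding integral equation. -/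
def IsCaraSol (K : ℕ) (T : ℝ)
    (φ : ℝ → EuclideanSpace ℝ (Fin K) → EuclideanSpace ℝ (Fin K))
    (y₀ : EuclideanSpace ℝ (Fin K)) (y : ℝ → EuclideanSpace ℝ (Fin K)) : Prop :=
  ContinuousOn y (Set.Icc 0 T) ∧ y 0 = y₀ ∧
  IntervalIntegrable (fun τ => φ τ (y τ)) MeasureTheory.volume 0 T ∧
  ∀ t ∈ Set.Icc 0 T, y t = y₀ + ∫ τ in (0:ℝ)..t, φ τ (y τ)

/-- An integral form of Grönwall's inequality. -/
private lemma gronwall_integral_le {u : ℝ → ℝ} {T a L : ℝ} (ha : 0 ≤ a) (hL : 0 ≤ L)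
    (hu : Continuous u) (hu0 : ∀ t, 0 ≤ u t)
    (h : ∀ t ∈ Set.Icc (0:ℝ) T, u t ≤ a + L * ∫ τ in (0:ℝ)..t, u τ) :
    ∀ t ∈ Set.Icc (0:ℝ) T, u t ≤ a * Real.exp (L * T) := by
  intro t ht
  set F : ℝ → ℝ := fun s => ∫ τ in (0:ℝ)..s, u τ with hF
  have hder : ∀ s : ℝ, HasDerivAt F (u s) s := fun s =>
    (hu.integral_hasStrictDerivAt 0 s).hasDerivAt
  have hFc : ContinuousOn F (Set.Icc 0 T) :=
    fun s _ => (hder s).continuousAt.continuousWithinAt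
  have key : ∀ s ∈ Set.Icc (0:ℝ) T, ‖F s‖ ≤ gronwallBound 0 L a (s - 0) := by
    apply norm_le_gronwallBound_of_norm_deriv_right_le hFc
      (fun s _ => (hder s).hasDerivWithinAt)
    · simp [hF]
    · intro s hs
      have h1 := h s (Set.mem_Icc.2 ⟨hs.1, hs.2.le⟩)
      have h2 : F s ≤ ‖F s‖ := le_abs_self _
      have h3 : 0 ≤ ‖F s‖ := norm_nonneg _
      have h4 : ‖u s‖ = u s := abs_of_nonneg (hu0 s)
      nlinarith [mul_le_mul_of_nonneg_left h2 hL]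
  have h3 := key t ht
  have h4 : F t ≤ gronwallBound 0 L a t := by
    have := (le_abs_self (F t)).trans h3
    simpa using this
  have h5 : u t ≤ a + L * gronwallBound 0 L a t := by
    refine (h t ht).trans ?_
    have := mul_le_mul_of_nonneg_left h4 hL
    linarith
  rcases eq_or_lt_of_le hL with hL0 | hLpos
  · rw [← hL0] at h5 ⊢
    simp only [zero_mul, Real.exp_zero, mul_one]
    simpa using h5
  · have hLne : L ≠ 0 := ne_of_gt hLpos
    simp only [gronwallBound_of_K_ne_0 hLne] at h5
    have he : a + L * (0 * Real.exp (L * t) + a / L * (Real.exp (L * t) - 1))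
        = a * Real.exp (L * t) := by
      field_simp
      ring
    rw [he] at h5
    refine h5.trans ?_
    have hexp : Real.exp (L * t) ≤ Real.exp (L * T) :=
      Real.exp_le_exp.2 (mul_le_mul_of_nonneg_left ht.2 hL)
    exact mul_le_mul_of_nonneg_left hexp ha

/-- Under (A1)–(A4), if along a sequence `ε_i → 0` in `(0,1]` the
perturbed problems `ẏ = f(t,y) + g(ε_i,t,y), y(0) = z_{ε_i}` have solutions `y^{ε_i}`
on `[0,T]` that are uniformly bounded, then `ẋ = f(t,x), x(0) = z` has a solution
on `[0, T]`. -/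
theorem limit_ode_existence_from_bounded_perturbed_solutions
    (K : ℕ) (hK : 1 ≤ K) (T : ℝ) (hT : 0 < T)
    (f : ℝ → EuclideanSpace ℝ (Fin K) → EuclideanSpace ℝ (Fin K))
    (g : ℝ → ℝ → EuclideanSpace ℝ (Fin K) → EuclideanSpace ℝ (Fin K))
    (z : EuclideanSpace ℝ (Fin K)) (zε : ℝ → EuclideanSpace ℝ (Fin K))
    -- (A1)
    (hA1 : ∃ C1 : ℝ, ∀ ε ∈ Set.Ioc (0:ℝ) 1, ∀ t ∈ Set.Icc (0:ℝ) T,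
      ‖f t 0‖ + ‖g ε t 0‖ ≤ C1)
    -- (A2)
    (hA2 : (∀ x, Measurable fun t => f t x) ∧
      (∀ ε ∈ Set.Ioc (0:ℝ) 1, ∀ x, Measurable fun t => f t x + g ε t x))
    -- (A3)
    (hA3 : ∀ r > (0:ℝ), ∃ L : ℝ,
      (∀ t ∈ Set.Icc (0:ℝ) T, ∀ x ∈ Metric.ball (0 : EuclideanSpace ℝ (Fin K)) r,
        ∀ y ∈ Metric.ball (0 : EuclideanSpace ℝ (Fin K)) r,
          ‖f t x - f t y‖ ≤ L * ‖x - y‖) ∧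
      (∀ ε ∈ Set.Ioc (0:ℝ) 1, ∀ t ∈ Set.Icc (0:ℝ) T,
        ∀ x ∈ Metric.ball (0 : EuclideanSpace ℝ (Fin K)) r,
        ∀ y ∈ Metric.ball (0 : EuclideanSpace ℝ (Fin K)) r,
          ‖(f t x + g ε t x) - (f t y + g ε t y)‖ ≤ L * ‖x - y‖))
    -- (A4)
    (hA4 : (∀ δ > (0:ℝ), ∃ ε₀ > (0:ℝ), ∀ ε ∈ Set.Ioc (0:ℝ) 1, ε ≤ ε₀ →
        ‖zε ε - z‖ ≤ δ) ∧
      (∀ r > (0:ℝ), ∀ δ > (0:ℝ), ∃ ε₀ > (0:ℝ), ∀ ε ∈ Set.Ioc (0:ℝ) 1, ε ≤ ε₀ →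
        ∀ t ∈ Set.Icc (0:ℝ) T, ∀ y ∈ Metric.ball (0 : EuclideanSpace ℝ (Fin K)) r,
          ‖g ε t y‖ ≤ δ))
    (εseq : ℕ → ℝ) (hεmem : ∀ i, εseq i ∈ Set.Ioc (0:ℝ) 1)
    (hεlim : Filter.Tendsto εseq Filter.atTop (nhds 0))
    (y : ℕ → ℝ → EuclideanSpace ℝ (Fin K))
    (hy : ∀ i, IsCaraSol K T (fun t v => f t v + g (εseq i) t v) (zε (εseq i)) (y i))
    (C2 : ℝ) (hbd : ∀ i, ∀ t ∈ Set.Icc (0:ℝ) T, ‖y i t‖ ≤ C2) :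
    ∃ x : ℝ → EuclideanSpace ℝ (Fin K), IsCaraSol K T f z x := by
  classical
  obtain ⟨C1, hC1⟩ := hA1
  obtain ⟨hA2f, -⟩ := hA2
  obtain ⟨hA4z, hA4g⟩ := hA4
  have hTnn : (0:ℝ) ≤ T := hT.le
  have hC2nn : 0 ≤ C2 := (norm_nonneg _).trans (hbd 0 0 ⟨le_refl 0, hTnn⟩)
  set r : ℝ := C2 + 1 with hrdef
  have hr0 : 0 < r := by positivity
  have hC2r : C2 < r := lt_add_one C2
  obtain ⟨L0, hL0f, hL0fg⟩ := hA3 r hr0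
  set L : ℝ := max L0 0 with hLdef
  have hL : 0 ≤ L := le_max_right _ _
  have hLf : ∀ t ∈ Set.Icc (0:ℝ) T, ∀ p ∈ Metric.ball (0:EuclideanSpace ℝ (Fin K)) r,
      ∀ q ∈ Metric.ball (0:EuclideanSpace ℝ (Fin K)) r, ‖f t p - f t q‖ ≤ L * ‖p - q‖ := by
    intro t ht p hp q hq
    exact (hL0f t ht p hp q hq).trans
      (mul_le_mul_of_nonneg_right (le_max_left _ _) (norm_nonneg _))
  have hLfg : ∀ i, ∀ t ∈ Set.Icc (0:ℝ) T, ∀ p ∈ Metric.ball (0:EuclideanSpace ℝ (Fin K)) r,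
      ∀ q ∈ Metric.ball (0:EuclideanSpace ℝ (Fin K)) r,
      ‖(f t p + g (εseq i) t p) - (f t q + g (εseq i) t q)‖ ≤ L * ‖p - q‖ := by
    intro i t ht p hp q hq
    exact (hL0fg (εseq i) (hεmem i) t ht p hp q hq).trans
      (mul_le_mul_of_nonneg_right (le_max_left _ _) (norm_nonneg _))
  have hyball : ∀ i, ∀ t ∈ Set.Icc (0:ℝ) T,
      y i t ∈ Metric.ball (0:EuclideanSpace ℝ (Fin K)) r :=
    fun i t ht => mem_ball_zero_iff.2 ((hbd i t ht).trans_lt hC2r)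
  -- g is eventually small along the sequence
  have hgsmall : ∀ η > (0:ℝ), ∃ N : ℕ, ∀ i ≥ N, ∀ t ∈ Set.Icc (0:ℝ) T,
      ∀ v ∈ Metric.ball (0:EuclideanSpace ℝ (Fin K)) r, ‖g (εseq i) t v‖ ≤ η := by
    intro η hη
    obtain ⟨ε₀, hε₀, hg⟩ := hA4g r hr0 η hη
    obtain ⟨N, hN⟩ := Filter.eventually_atTop.1 (hεlim.eventually_lt_const hε₀)
    exact ⟨N, fun i hi t ht v hv => hg (εseq i) (hεmem i) ((hN i hi).le) t ht v hv⟩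
  have hzsmall : ∀ η > (0:ℝ), ∃ N : ℕ, ∀ i ≥ N, ‖zε (εseq i) - z‖ ≤ η := by
    intro η hη
    obtain ⟨ε₀, hε₀, hzc⟩ := hA4z η hη
    obtain ⟨N, hN⟩ := Filter.eventually_atTop.1 (hεlim.eventually_lt_const hε₀)
    exact ⟨N, fun i hi => hzc (εseq i) (hεmem i) (hN i hi).le⟩
  -- the clamped solutions, continuous on all of ℝ
  set P : ℝ → ℝ := fun s => max 0 (min s T) with hPdef
  have hPmem : ∀ s, P s ∈ Set.Icc (0:ℝ) T := fun s =>
    ⟨le_max_left _ _, max_le hTnn (min_le_right _ _)⟩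
  have hPcont : Continuous P := continuous_const.max (continuous_id.min continuous_const)
  have hPid : ∀ s ∈ Set.Icc (0:ℝ) T, P s = s := by
    intro s hs
    simp [hPdef, min_eq_left hs.2, max_eq_right hs.1]
  set Y : ℕ → ℝ → EuclideanSpace ℝ (Fin K) := fun i s => y i (P s) with hYdef
  have hYcont : ∀ i, Continuous (Y i) := fun i => (hy i).1.comp_continuous hPcont hPmem
  have hYeq : ∀ i, ∀ s ∈ Set.Icc (0:ℝ) T, Y i s = y i s := fun i s hs => by
    simp [hYdef, hPid s hs]
  -- the key Cauchy-type estimate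
  set M : ℝ := (2 + 2 * T) * Real.exp (L * T) with hMdef
  have hM : 0 < M := by positivity
  have key : ∀ η > (0:ℝ), ∃ N : ℕ, ∀ i ≥ N, ∀ j ≥ N, ∀ s : ℝ,
      ‖Y i s - Y j s‖ ≤ η * M := by
    intro η hη
    obtain ⟨N1, hN1⟩ := hgsmall η hη
    obtain ⟨N2, hN2⟩ := hzsmall η hη
    refine ⟨max N1 N2, fun i hi j hj s => ?_⟩
    have hi1 : N1 ≤ i := le_trans (le_max_left _ _) hi
    have hi2 : N2 ≤ i := le_trans (le_max_right _ _) hi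
    have hj1 : N1 ≤ j := le_trans (le_max_left _ _) hj
    have hj2 : N2 ≤ j := le_trans (le_max_right _ _) hj
    set u : ℝ → ℝ := fun τ => ‖Y i τ - Y j τ‖ with hudef
    have hucont : Continuous u := ((hYcont i).sub (hYcont j)).norm
    set a : ℝ := ‖zε (εseq i) - zε (εseq j)‖ + 2 * η * T with hadef
    have ha : 0 ≤ a := add_nonneg (norm_nonneg _) (by positivity)
    have hIi : IntervalIntegrable (fun τ => f τ (y i τ) + g (εseq i) τ (y i τ))
        volume 0 T := (hy i).2.2.1
    have hIj : IntervalIntegrable (fun τ => f τ (y j τ) + g (εseq j) τ (y j τ))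
        volume 0 T := (hy j).2.2.1
    have hint : ∀ t ∈ Set.Icc (0:ℝ) T, u t ≤ a + L * ∫ τ in (0:ℝ)..t, u τ := by
      intro t ht
      have hsub : Set.uIcc (0:ℝ) t ⊆ Set.uIcc (0:ℝ) T := by
        rw [Set.uIcc_of_le ht.1, Set.uIcc_of_le hTnn]
        exact Set.Icc_subset_Icc le_rfl ht.2
      have hIit := hIi.mono_set hsub
      have hIjt := hIj.mono_set hsub
      have hdiff : y i t - y j t = (zε (εseq i) - zε (εseq j)) +
          ∫ τ in (0:ℝ)..t, ((f τ (y i τ) + g (εseq i) τ (y i τ))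
            - (f τ (y j τ) + g (εseq j) τ (y j τ))) := by
        rw [intervalIntegral.integral_sub hIit hIjt, (hy i).2.2.2 t ht, (hy j).2.2.2 t ht]
        abel
      have hptwise : ∀ τ ∈ Set.Icc (0:ℝ) t,
          ‖(f τ (y i τ) + g (εseq i) τ (y i τ)) - (f τ (y j τ) + g (εseq j) τ (y j τ))‖
            ≤ L * u τ + 2 * η := by
        intro τ hτ
        have hτT : τ ∈ Set.Icc (0:ℝ) T := ⟨hτ.1, hτ.2.trans ht.2⟩
        have hbi := hyball i τ hτT
        have hbj := hyball j τ hτT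
        have e1 : (f τ (y i τ) + g (εseq i) τ (y i τ))
            - (f τ (y j τ) + g (εseq j) τ (y j τ)) =
            ((f τ (y i τ) + g (εseq i) τ (y i τ)) - (f τ (y j τ) + g (εseq i) τ (y j τ)))
            + (g (εseq i) τ (y j τ) - g (εseq j) τ (y j τ)) := by abel
        rw [e1]
        have h2 := hLfg i τ hτT _ hbi _ hbj
        have h3 := hN1 i hi1 τ hτT _ hbj
        have h4 := hN1 j hj1 τ hτT _ hbj
        have huτ : u τ = ‖y i τ - y j τ‖ := by
          rw [hudef]; simp only [hYeq i τ hτT, hYeq j τ hτT]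
        calc ‖((f τ (y i τ) + g (εseq i) τ (y i τ)) - (f τ (y j τ) + g (εseq i) τ (y j τ)))
              + (g (εseq i) τ (y j τ) - g (εseq j) τ (y j τ))‖
            ≤ ‖(f τ (y i τ) + g (εseq i) τ (y i τ)) - (f τ (y j τ) + g (εseq i) τ (y j τ))‖
              + ‖g (εseq i) τ (y j τ) - g (εseq j) τ (y j τ)‖ := norm_add_le _ _
          _ ≤ L * ‖y i τ - y j τ‖
              + (‖g (εseq i) τ (y j τ)‖ + ‖g (εseq j) τ (y j τ)‖) :=
            add_le_add h2 (norm_sub_le _ _)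
          _ ≤ L * u τ + 2 * η := by rw [huτ]; linarith
      have hnormint : ‖∫ τ in (0:ℝ)..t, ((f τ (y i τ) + g (εseq i) τ (y i τ))
            - (f τ (y j τ) + g (εseq j) τ (y j τ)))‖
          ≤ ∫ τ in (0:ℝ)..t, (L * u τ + 2 * η) := by
        refine (intervalIntegral.norm_integral_le_integral_norm ht.1).trans ?_
        refine intervalIntegral.integral_mono_on ht.1 ((hIit.sub hIjt).norm)
          (((continuous_const.mul hucont).add continuous_const).intervalIntegrable 0 t)
          (fun τ hτ => hptwise τ hτ)
      have hval : ∫ τ in (0:ℝ)..t, (L * u τ + 2 * η)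
          = L * (∫ τ in (0:ℝ)..t, u τ) + 2 * η * t := by
        rw [intervalIntegral.integral_add (f := fun τ => L * u τ) (g := fun _ => 2 * η)
          ((continuous_const.mul hucont).intervalIntegrable 0 t)
          (intervalIntegrable_const), intervalIntegral.integral_const_mul,
          intervalIntegral.integral_const]
        simp [smul_eq_mul]
        ring
      have hut : u t = ‖y i t - y j t‖ := by
        rw [hudef]; simp only [hYeq i t ht, hYeq j t ht]
      have h2ηt : 2 * η * t ≤ 2 * η * T :=
        mul_le_mul_of_nonneg_left ht.2 (by positivity)
      rw [hut, hdiff]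
      calc ‖(zε (εseq i) - zε (εseq j)) + ∫ τ in (0:ℝ)..t,
              ((f τ (y i τ) + g (εseq i) τ (y i τ))
              - (f τ (y j τ) + g (εseq j) τ (y j τ)))‖
          ≤ ‖zε (εseq i) - zε (εseq j)‖ + ‖∫ τ in (0:ℝ)..t,
              ((f τ (y i τ) + g (εseq i) τ (y i τ))
              - (f τ (y j τ) + g (εseq j) τ (y j τ)))‖ := norm_add_le _ _
        _ ≤ ‖zε (εseq i) - zε (εseq j)‖
            + (L * (∫ τ in (0:ℝ)..t, u τ) + 2 * η * t) := by
          rw [← hval]; exact add_le_add le_rfl hnormint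
        _ ≤ a + L * ∫ τ in (0:ℝ)..t, u τ := by rw [hadef]; linarith
    have hgr := gronwall_integral_le ha hL hucont (fun τ => norm_nonneg _) hint
    have hPs := hgr (P s) (hPmem s)
    have huPs : ‖Y i s - Y j s‖ = u (P s) := by
      rw [hudef]
      simp only [hYdef, hPid (P s) (hPmem s)]
    have hab : a ≤ 2 * η + 2 * η * T := by
      have h5i := hN2 i hi2
      have h5j := hN2 j hj2
      have h6 : ‖zε (εseq i) - zε (εseq j)‖ ≤ 2 * η := by
        calc ‖zε (εseq i) - zε (εseq j)‖
            = ‖(zε (εseq i) - z) - (zε (εseq j) - z)‖ := by congr 1; abel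
          _ ≤ ‖zε (εseq i) - z‖ + ‖zε (εseq j) - z‖ := norm_sub_le _ _
          _ ≤ 2 * η := by linarith
      rw [hadef]; linarith
    calc ‖Y i s - Y j s‖ = u (P s) := huPs
      _ ≤ a * Real.exp (L * T) := hPs
      _ ≤ (2 * η + 2 * η * T) * Real.exp (L * T) :=
        mul_le_mul_of_nonneg_right hab (Real.exp_nonneg _)
      _ = η * M := by rw [hMdef]; ring
  -- pointwise convergence to a limit function
  have hcau : ∀ s : ℝ, CauchySeq fun i => Y i s := by
    intro s
    rw [Metric.cauchySeq_iff]
    intro ε hε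
    obtain ⟨N, hN⟩ := key (ε / (2 * M)) (by positivity)
    refine ⟨N, fun m hm n hn => ?_⟩
    rw [dist_eq_norm]
    have h7 := hN m hm n hn s
    have h8 : ε / (2 * M) * M = ε / 2 := by field_simp
    rw [h8] at h7
    linarith
  have hx' := fun s => cauchySeq_tendsto_of_complete (hcau s)
  choose x hx using hx'
  -- uniform convergence
  have hunif : ∀ η > (0:ℝ), ∃ N : ℕ, ∀ i ≥ N, ∀ s : ℝ, ‖Y i s - x s‖ ≤ η * M := by
    intro η hη
    obtain ⟨N, hN⟩ := key η hη
    refine ⟨N, fun i hi s => ?_⟩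
    have hlim : Filter.Tendsto (fun j => ‖Y i s - Y j s‖) Filter.atTop
        (nhds ‖Y i s - x s‖) := (tendsto_const_nhds.sub (hx s)).norm
    exact le_of_tendsto hlim (Filter.eventually_atTop.2 ⟨N, fun j hj => hN i hi j hj s⟩)
  have hxcont : Continuous x := by
    have htu : TendstoUniformly Y x Filter.atTop := by
      rw [Metric.tendstoUniformly_iff]
      intro ε hε
      obtain ⟨N, hN⟩ := hunif (ε / (2 * M)) (by positivity)
      refine Filter.eventually_atTop.2 ⟨N, fun i hi s => ?_⟩
      have h6 := hN i hi s
      have h8 : ε / (2 * M) * M = ε / 2 := by field_simp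
      rw [h8] at h6
      rw [dist_comm, dist_eq_norm]
      linarith
    exact htu.continuous (Filter.Eventually.of_forall hYcont).frequently
  have hzlim : Filter.Tendsto (fun i => zε (εseq i)) Filter.atTop (nhds z) := by
    rw [Metric.tendsto_atTop]
    intro ε hε
    obtain ⟨N, hN⟩ := hzsmall (ε / 2) (by positivity)
    exact ⟨N, fun i hi => by rw [dist_eq_norm]; linarith [hN i hi]⟩
  have hx0 : x 0 = z := by
    have h7 : Filter.Tendsto (fun i => Y i 0) Filter.atTop (nhds (x 0)) := hx 0
    have h8 : ∀ i, Y i 0 = zε (εseq i) := by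
      intro i
      have hP0 : P 0 = 0 := hPid 0 ⟨le_rfl, hTnn⟩
      simp only [hYdef, hP0]
      exact (hy i).2.1
    exact tendsto_nhds_unique (h7.congr h8) hzlim
  have hxbd : ∀ s, ‖x s‖ ≤ C2 := fun s =>
    le_of_tendsto (hx s).norm (Filter.Eventually.of_forall fun i => hbd i (P s) (hPmem s))
  have hxball : ∀ s, x s ∈ Metric.ball (0:EuclideanSpace ℝ (Fin K)) r :=
    fun s => mem_ball_zero_iff.2 ((hxbd s).trans_lt hC2r)
  -- continuity of f t for t in [0, T]
  have hfcont : ∀ t ∈ Set.Icc (0:ℝ) T, Continuous (f t) := by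
    intro t ht
    rw [continuous_iff_continuousAt]
    intro v
    obtain ⟨L2, hL2, -⟩ := hA3 (‖v‖ + 1) (by positivity)
    have hball : Metric.ball (0:EuclideanSpace ℝ (Fin K)) (‖v‖ + 1) ∈ nhds v :=
      Metric.isOpen_ball.mem_nhds (mem_ball_zero_iff.2 (lt_add_one _))
    have hlip : LipschitzOnWith (Real.toNNReal L2) (f t)
        (Metric.ball (0:EuclideanSpace ℝ (Fin K)) (‖v‖ + 1)) := by
      apply LipschitzOnWith.of_dist_le'
      intro p hp q hq
      rw [dist_eq_norm, dist_eq_norm]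
      exact hL2 t ht p hp q hq
    exact hlip.continuousOn.continuousAt hball
  -- measurability and integrability of the limit vector field
  have humeas : StronglyMeasurable
      (Function.uncurry fun (v : EuclideanSpace ℝ (Fin K)) (t : ℝ) => f (P t) v) := by
    apply stronglyMeasurable_uncurry_of_continuous_of_stronglyMeasurable
    · intro t
      exact hfcont (P t) (hPmem t)
    · intro v
      exact ((hA2f v).comp hPcont.measurable).stronglyMeasurable
  have hGmeas : StronglyMeasurable fun τ => f (P τ) (x τ) :=
    humeas.comp_measurable (hxcont.measurable.prodMk measurable_id)
  have hGbd : ∀ τ, ‖f (P τ) (x τ)‖ ≤ C1 + L * r := by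
    intro τ
    have h0b : (0:EuclideanSpace ℝ (Fin K)) ∈ Metric.ball (0:EuclideanSpace ℝ (Fin K)) r :=
      mem_ball_zero_iff.2 (by simpa using hr0)
    have h1 := hLf (P τ) (hPmem τ) (x τ) (hxball τ) 0 h0b
    have h2 : ‖f (P τ) 0‖ ≤ C1 := by
      have := hC1 (εseq 0) (hεmem 0) (P τ) (hPmem τ)
      linarith [norm_nonneg (g (εseq 0) (P τ) 0)]
    have h3 : ‖x τ - 0‖ ≤ r := by
      rw [sub_zero]; exact (hxbd τ).trans hC2r.le
    have h4 : f (P τ) (x τ) = (f (P τ) (x τ) - f (P τ) 0) + f (P τ) 0 := by abel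
    calc ‖f (P τ) (x τ)‖ = ‖(f (P τ) (x τ) - f (P τ) 0) + f (P τ) 0‖ := by rw [← h4]
      _ ≤ ‖f (P τ) (x τ) - f (P τ) 0‖ + ‖f (P τ) 0‖ := norm_add_le _ _
      _ ≤ L * r + C1 := add_le_add (h1.trans (mul_le_mul_of_nonneg_left h3 hL)) h2
      _ = C1 + L * r := by ring
  have hGint : IntervalIntegrable (fun τ => f (P τ) (x τ)) volume 0 T := by
    rw [intervalIntegrable_iff]
    apply Measure.integrableOn_of_bounded (M := C1 + L * r)
    · exact (measure_Ioc_lt_top).ne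
    · exact hGmeas.aestronglyMeasurable
    · exact Filter.Eventually.of_forall hGbd
  have hxint : IntervalIntegrable (fun τ => f τ (x τ)) volume 0 T := by
    rw [intervalIntegrable_iff] at hGint ⊢
    refine hGint.congr_fun ?_ measurableSet_uIoc
    intro τ hτ
    rw [Set.uIoc_of_le hTnn] at hτ
    simp only []
    rw [hPid τ ⟨hτ.1.le, hτ.2⟩]
  -- the limit integral equation
  have heq : ∀ t ∈ Set.Icc (0:ℝ) T, x t = z + ∫ τ in (0:ℝ)..t, f τ (x τ) := by
    intro t ht
    have hsub : Set.uIcc (0:ℝ) t ⊆ Set.uIcc (0:ℝ) T := by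
      rw [Set.uIcc_of_le ht.1, Set.uIcc_of_le hTnn]
      exact Set.Icc_subset_Icc le_rfl ht.2
    have hfx_int : IntervalIntegrable (fun τ => f τ (x τ)) volume 0 t :=
      hxint.mono_set hsub
    have htend : Filter.Tendsto
        (fun i => ∫ τ in (0:ℝ)..t, (f τ (y i τ) + g (εseq i) τ (y i τ)))
        Filter.atTop (nhds (∫ τ in (0:ℝ)..t, f τ (x τ))) := by
      rw [Metric.tendsto_atTop]
      intro ε hε
      set η : ℝ := ε / ((L + 1) * (T + 1) * 2) with hηdef
      have hη : 0 < η := by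
        rw [hηdef]
        positivity
      obtain ⟨N1, hN1⟩ := hgsmall η hη
      obtain ⟨N2, hN2⟩ := hunif (η / M) (by positivity)
      refine ⟨max N1 N2, fun i hi => ?_⟩
      have hi1 : N1 ≤ i := le_trans (le_max_left _ _) hi
      have hi2 : N2 ≤ i := le_trans (le_max_right _ _) hi
      have hIit := ((hy i).2.2.1).mono_set hsub
      rw [dist_eq_norm, ← intervalIntegral.integral_sub hIit hfx_int]
      have hbound : ∀ τ ∈ Set.uIoc (0:ℝ) t,
          ‖(f τ (y i τ) + g (εseq i) τ (y i τ)) - f τ (x τ)‖ ≤ (L + 1) * η := by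
        intro τ hτ
        have hτI : τ ∈ Set.Icc (0:ℝ) T := by
          rw [Set.uIoc_of_le ht.1] at hτ
          exact ⟨hτ.1.le, hτ.2.trans ht.2⟩
        have e1 : (f τ (y i τ) + g (εseq i) τ (y i τ)) - f τ (x τ) =
            (f τ (y i τ) - f τ (x τ)) + g (εseq i) τ (y i τ) := by abel
        rw [e1]
        have h2 := hLf τ hτI _ (hyball i τ hτI) _ (hxball τ)
        have h3 := hN1 i hi1 τ hτI _ (hyball i τ hτI)
        have h4 : ‖y i τ - x τ‖ ≤ η := by
          have h5 := hN2 i hi2 τ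
          rw [hYeq i τ hτI] at h5
          have h6 : η / M * M = η := by field_simp
          rw [h6] at h5
          exact h5
        calc ‖(f τ (y i τ) - f τ (x τ)) + g (εseq i) τ (y i τ)‖
            ≤ ‖f τ (y i τ) - f τ (x τ)‖ + ‖g (εseq i) τ (y i τ)‖ := norm_add_le _ _
          _ ≤ L * ‖y i τ - x τ‖ + η := add_le_add h2 h3
          _ ≤ (L + 1) * η := by nlinarith [mul_le_mul_of_nonneg_left h4 hL]
      have h5 := intervalIntegral.norm_integral_le_of_norm_le_const hbound
      have h6 : (L + 1) * η * |t - 0| ≤ (L + 1) * η * T := by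
        rw [sub_zero, abs_of_nonneg ht.1]
        exact mul_le_mul_of_nonneg_left ht.2 (by positivity)
      have h7 : (L + 1) * η * T < ε := by
        have he : (L + 1) * η * T = ε * (T / ((T + 1) * 2)) := by
          rw [hηdef]; field_simp
        have hlt : T / ((T + 1) * 2) < 1 := (div_lt_one (by positivity)).2 (by linarith)
        rw [he]
        calc ε * (T / ((T + 1) * 2)) < ε * 1 := by
              exact mul_lt_mul_of_pos_left hlt hε
          _ = ε := mul_one ε
      linarith
    have hYt : Filter.Tendsto (fun i => y i t) Filter.atTop (nhds (x t)) :=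
      (hx t).congr (fun i => hYeq i t ht)
    have h8 : Filter.Tendsto (fun i => y i t) Filter.atTop
        (nhds (z + ∫ τ in (0:ℝ)..t, f τ (x τ))) :=
      (hzlim.add htend).congr (fun i => ((hy i).2.2.2 t ht).symm)
    exact tendsto_nhds_unique hYt h8
  exact ⟨x, hxcont.continuousOn, hx0, hxint, heq⟩
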